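/- Let K ⊂ ℝ² be a compact connected set with L := H¹(K) < ∞. Then there exists a Lipschitz surjective map f : [0, L] → K; in particular K is arcwise connected. -/

import Mathlib

open MeasureTheory Metric Set Filter Topology
open scoped ENNReal NNReal

local notation "E" => EuclideanSpace ℝ (Fin 2)

lemma key_lb (K : Set E) (hK : IsCompact K) (hconn : IsPreconnected K)
    {x : E} (hx : x ∈ K) {r : ℝ} (hr : 0 ≤ r) (hy : ∃ y ∈ K, r ≤ dist x y) :
    ENNReal.ofReal r ≤ μH[1] (K ∩ closedBall x r) := by
  obtain ⟨y, hyK, hxy⟩ := hy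
  have hg : LipschitzWith 1 (dist x) := LipschitzWith.dist_right x
  have hconn' : IsPreconnected ((dist x) '' K) :=
    hconn.image _ (hg.continuous.continuousOn)
  have hIcc : Icc (0:ℝ) (dist x y) ⊆ (dist x) '' K := by
    apply hconn'.Icc_subset ⟨x, hx, dist_self x⟩ ⟨y, hyK, rfl⟩
  have hsub : Icc (0:ℝ) r ⊆ (dist x) '' (K ∩ closedBall x r) := by
    intro t ht
    obtain ⟨z, hzK, hz⟩ := hIcc ⟨ht.1, ht.2.trans hxy⟩
    exact ⟨z, ⟨hzK, by simp [mem_closedBall, dist_comm, hz, ht.2]⟩, hz⟩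
  calc ENNReal.ofReal r = μH[1] (Icc (0:ℝ) r) := by
        rw [hausdorffMeasure_real, Real.volume_Icc]; simp
    _ ≤ μH[1] ((dist x) '' (K ∩ closedBall x r)) := measure_mono hsub
    _ ≤ 1 * μH[1] (K ∩ closedBall x r) := by
        simpa using hg.hausdorffMeasure_image_le (d := 1) one_pos.le (K ∩ closedBall x r)
    _ = _ := one_mul _

lemma count_lb (K : Set E) (hK : IsCompact K) (hconn : IsPreconnected K)
    {ε : ℝ} (hε : 0 < ε) (S : Finset E) (hSK : ↑S ⊆ K)
    (hsep : ∀ a ∈ S, ∀ b ∈ S, a ≠ b → ε ≤ dist a b) (h2 : 2 ≤ S.card) :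
    (S.card : ℝ≥0∞) * ENNReal.ofReal (ε/3) ≤ μH[1] K := by
  have hdisj : (↑S : Set E).PairwiseDisjoint (fun s => K ∩ closedBall s (ε/3)) := by
    intro a ha b hb hab
    refine Set.disjoint_left.2 fun z ⟨_, hza⟩ ⟨_, hzb⟩ => ?_
    have := hsep a ha b hb hab
    have : dist a b ≤ ε/3 + ε/3 :=
      (dist_triangle a z b).trans (add_le_add (by simpa [dist_comm] using hza) hzb)
    linarith
  have hmeas : ∀ s ∈ S, MeasurableSet (K ∩ closedBall s (ε/3)) := fun s _ =>
    hK.measurableSet.inter measurableSet_closedBall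
  have hunion : μH[1] (⋃ s ∈ S, K ∩ closedBall s (ε/3)) ≤ μH[1] K :=
    measure_mono (by simp [Set.iUnion_subset_iff, Set.inter_subset_left])
  rw [measure_biUnion_finset hdisj hmeas] at hunion
  refine le_trans ?_ hunion
  rw [Finset.card_eq_sum_ones S, Nat.cast_sum]
  rw [Finset.sum_mul]
  refine Finset.sum_le_sum fun s hs => ?_
  rw [Nat.cast_one, one_mul]
  obtain ⟨t, ht, hts⟩ := Finset.exists_mem_ne (lt_of_lt_of_le one_lt_two h2) s
  exact key_lb K hK hconn (hSK hs) (by linarith) ⟨t, hSK ht, by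
    have := hsep s hs t ht (Ne.symm hts); linarith [dist_comm s t ▸ this]⟩

lemma exists_net (K : Set E) (hK : IsCompact K) (hne : K.Nonempty) {ε : ℝ} (hε : 0 < ε) :
    ∃ S : Finset E, ↑S ⊆ K ∧ S.Nonempty ∧
      (∀ a ∈ S, ∀ b ∈ S, a ≠ b → ε ≤ dist a b) ∧
      (∀ x ∈ K, ∃ s ∈ S, dist x s ≤ ε) := by
  classical
  -- bound on cardinality of separated sets
  obtain ⟨T, hTfin, hTcov⟩ : ∃ T : Set E, T.Finite ∧ K ⊆ ⋃ y ∈ T, ball y (ε/2) := by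
    rcases hK.elim_finite_subcover (fun y : E => ball y (ε/2)) (fun _ => isOpen_ball)
      (fun x hx => mem_iUnion.2 ⟨x, mem_ball_self (by linarith)⟩) with ⟨T, hT⟩
    exact ⟨↑T, T.finite_toSet, by simpa using hT⟩
  have hbound : ∀ S : Finset E, ↑S ⊆ K → (∀ a ∈ S, ∀ b ∈ S, a ≠ b → ε ≤ dist a b) →
      S.card ≤ hTfin.toFinset.card := by
    intro S hSK hsep
    have : ∀ s ∈ S, ∃ y ∈ hTfin.toFinset, s ∈ ball y (ε/2) := by
      intro s hs
      rcases mem_iUnion₂.1 (hTcov (hSK hs)) with ⟨y, hy, hsy⟩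
      exact ⟨y, hTfin.mem_toFinset.2 hy, hsy⟩
    choose g hg1 hg2 using this
    have hinj : ∀ a ha b hb, g a ha = g b hb → a = b := by
      intro a ha b hb hab
      by_contra hne'
      have h1 := hg2 a ha
      have h2 := hg2 b hb
      rw [hab] at h1
      have := hsep a ha b hb hne'
      have hb1 : dist a (g b hb) < ε/2 := mem_ball.1 h1
      have hb2 : dist (g b hb) b < ε/2 := by simpa [dist_comm] using mem_ball.1 h2
      have : dist a b < ε := by
        have := dist_triangle a (g b hb) b; linarith
      linarith
    exact Finset.card_le_card_of_injOn (fun a => if h : a ∈ S then g a h else a)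
      (fun a ha => by rw [Finset.mem_coe] at ha; simpa [ha] using hg1 a ha) (fun a ha b hb hab => by
        simp only [Finset.mem_coe] at ha hb
        simpa [ha, hb] using hinj a ha b hb (by simpa [ha, hb] using hab))
  -- take a separated set of maximal cardinality
  set 𝒮 : Set ℕ := {n | ∃ S : Finset E, ↑S ⊆ K ∧ (∀ a ∈ S, ∀ b ∈ S, a ≠ b → ε ≤ dist a b) ∧ S.card = n}
  obtain ⟨x₀, hx₀⟩ := hne
  have h1 : 1 ∈ 𝒮 := ⟨{x₀}, by simpa using hx₀, by simp, by simp⟩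
  have hbdd : BddAbove 𝒮 := ⟨hTfin.toFinset.card, fun n ⟨S, h₁, h₂, h₃⟩ => h₃ ▸ hbound S h₁ h₂⟩
  have hmem : sSup 𝒮 ∈ 𝒮 := Nat.sSup_mem ⟨1, h1⟩ hbdd
  obtain ⟨S, hSK, hsep, hcard⟩ := hmem
  refine ⟨S, hSK, Finset.card_pos.1 (by rw [hcard]; exact le_csSup hbdd h1), hsep, ?_⟩
  intro x hx
  by_contra hcon
  push_neg at hcon
  have hxS : x ∉ S := fun h => by have := hcon x h; rw [dist_self] at this; linarith
  have : (insert x S).card ∈ 𝒮 := by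
    refine ⟨insert x S, ?_, ?_, rfl⟩
    · intro z hz
      rcases Finset.mem_insert.1 (by exact_mod_cast hz) with h | h
      · exact h ▸ hx
      · exact hSK h
    · intro a ha b hb hab
      rcases Finset.mem_insert.1 ha with rfl | ha' <;> rcases Finset.mem_insert.1 hb with rfl | hb'
      · exact absurd rfl hab
      · exact le_of_lt (by simpa [dist_comm] using hcon b hb')
      · exact le_of_lt (by simpa [dist_comm] using hcon a ha')
      · exact hsep a ha' b hb' hab
  have := le_csSup hbdd this
  rw [Finset.card_insert_of_notMem hxS, hcard] at this
  omega

lemma net_conn (K : Set E) (hconn : IsPreconnected K)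
    {ε : ℝ} (hε : 0 < ε) (S : Finset E) (hSK : ↑S ⊆ K)
    (hdense : ∀ x ∈ K, ∃ s ∈ S, dist x s ≤ ε) :
    ∀ A ⊆ S, A.Nonempty → A ≠ S → ∃ a ∈ A, ∃ b ∈ S, b ∉ A ∧ dist a b ≤ 2*ε := by
  classical
  intro A hAS hAne hAneS
  set U : Set E := ⋃ a ∈ A, closedBall a ε with hU
  set V : Set E := ⋃ b ∈ (S \ A), closedBall b ε with hV
  have hUc : IsClosed U := (A.finite_toSet).isClosed_biUnion fun _ _ => isClosed_closedBall
  have hVc : IsClosed V := ((S \ A).finite_toSet).isClosed_biUnion fun _ _ => isClosed_closedBall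
  have hcover : K ⊆ U ∪ V := by
    intro x hx
    obtain ⟨s, hs, hxs⟩ := hdense x hx
    by_cases hsA : s ∈ A
    · exact Or.inl (mem_biUnion hsA (mem_closedBall.2 hxs))
    · exact Or.inr (mem_biUnion (Finset.mem_sdiff.2 ⟨hs, hsA⟩) (mem_closedBall.2 hxs))
  obtain ⟨a₀, ha₀⟩ := hAne
  obtain ⟨b₀, hb₀⟩ : (S \ A).Nonempty := by
    rw [Finset.sdiff_nonempty]; exact fun h => hAneS (Finset.Subset.antisymm hAS h)
  have hKU : (K ∩ U).Nonempty :=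
    ⟨a₀, hSK (hAS ha₀), mem_biUnion ha₀ (mem_closedBall_self hε.le)⟩
  have hKV : (K ∩ V).Nonempty :=
    ⟨b₀, hSK (Finset.mem_sdiff.1 hb₀).1, mem_biUnion hb₀ (mem_closedBall_self hε.le)⟩
  obtain ⟨z, hzK, hzU, hzV⟩ := isPreconnected_closed_iff.1 hconn U V hUc hVc hcover hKU hKV
  obtain ⟨a, haA, hza⟩ := mem_iUnion₂.1 hzU
  obtain ⟨b, hbSA, hzb⟩ := mem_iUnion₂.1 hzV
  refine ⟨a, haA, b, (Finset.mem_sdiff.1 hbSA).1, (Finset.mem_sdiff.1 hbSA).2, ?_⟩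
  have h1 : dist z a ≤ ε := mem_closedBall.1 hza
  have h2 : dist z b ≤ ε := mem_closedBall.1 hzb
  have := dist_triangle a z b
  rw [dist_comm a z] at this
  linarith

section Graph

variable {α : Type*} (R : α → α → Prop)

def GoodChain (S : Finset α) (x y : α) (l : List α) : Prop :=
  l.IsChain R ∧ (∀ z ∈ l, z ∈ S) ∧ l.head? = some x ∧ l.getLast? = some y

def Reach (S : Finset α) (x y : α) : Prop := ∃ l, GoodChain R S x y l

def GSep (S : Finset α) : Prop :=
  ∀ A : Finset α, A ⊆ S → A.Nonempty → A ≠ S → ∃ a ∈ A, ∃ b ∈ S, b ∉ A ∧ R a b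

lemma goodChain_ne_nil {S : Finset α} {x y : α} {l : List α}
    (h : GoodChain R S x y l) : l ≠ [] := by
  intro h'; rw [h'] at h; simp [GoodChain] at h

lemma reach_single {S : Finset α} {x : α} (hx : x ∈ S) : Reach R S x x :=
  ⟨[x], by simp [GoodChain], by simpa, by simp, by simp⟩

lemma reach_of_sep {S : Finset α} (hS : GSep R S) {x : α} (hx : x ∈ S) :
    ∀ y ∈ S, Reach R S x y := by
  classical
  set A : Finset α := S.filter (fun y => Reach R S x y) with hA
  have hxA : x ∈ A := Finset.mem_filter.2 ⟨hx, reach_single R hx⟩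
  have hAeq : A = S := by
    by_contra hne
    obtain ⟨a, haA, b, hbS, hbA, hab⟩ := hS A (Finset.filter_subset _ _) ⟨x, hxA⟩ hne
    obtain ⟨l, hl1, hl2, hl3, hl4⟩ := (Finset.mem_filter.1 haA).2
    refine hbA (Finset.mem_filter.2 ⟨hbS, ⟨l ++ [b], ?_, ?_, ?_, ?_⟩⟩)
    · rw [List.isChain_append]
      exact ⟨hl1, List.isChain_singleton b, fun u hu v hv => by
        rw [hl4] at hu; simp at hu hv; rw [← hu, ← hv]; exact hab⟩
    · intro z hz
      rcases List.mem_append.1 hz with h | h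
      · exact hl2 z h
      · simp at h; rw [h]; exact hbS
    · rw [List.head?_append_of_ne_nil _ (goodChain_ne_nil R ⟨hl1, hl2, hl3, hl4⟩)]
      exact hl3
    · simp
  intro y hy
  rw [← hAeq] at hy
  exact (Finset.mem_filter.1 hy).2

lemma chain_cross {P : α → Prop} :
    ∀ (l : List α), l.IsChain R → ∀ x y, l.head? = some x → l.getLast? = some y →
      P x → ¬ P y → ∃ u ∈ l, ∃ v ∈ l, R u v ∧ P u ∧ ¬ P v := by
  intro l
  induction l with
  | nil => intro _ x y hx; simp at hx
  | cons a l ih =>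
    intro hch x y hx hy hPx hPy
    obtain rfl : a = x := by simpa using hx
    match l, hy with
    | [], hy =>
      simp at hy
      subst hy
      exact absurd hPx hPy
    | b :: l', hy =>
      by_cases hPb : P b
      · have hch' : (b :: l').IsChain R := hch.tail
        have hy' : (b :: l').getLast? = some y := by
          rw [← hy]; symm; exact List.getLast?_cons_cons ..
        obtain ⟨u, hu, v, hv, h⟩ := ih hch' b y rfl hy' hPb hPy
        exact ⟨u, List.mem_cons_of_mem _ hu, v, List.mem_cons_of_mem _ hv, h⟩
      · exact ⟨a, List.mem_cons_self, b, List.mem_cons_of_mem _ (List.mem_cons_self),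
          (List.isChain_cons_cons.1 hch).1, hPx, hPb⟩

lemma sep_of_reach {S : Finset α} (h : ∀ x ∈ S, ∀ y ∈ S, Reach R S x y) : GSep R S := by
  classical
  intro A hAS hAne hAneS
  obtain ⟨a, ha⟩ := hAne
  obtain ⟨b, hbS, hbA⟩ : ∃ b ∈ S, b ∉ A := by
    by_contra hc
    push_neg at hc
    exact hAneS (Finset.Subset.antisymm hAS hc)
  obtain ⟨l, hl1, hl2, hl3, hl4⟩ := h a (hAS ha) b hbS
  obtain ⟨u, hu, v, hv, huv, hPu, hPv⟩ :=
    chain_cross R (P := fun z => z ∈ A) l hl1 a b hl3 hl4 ha hbA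
  exact ⟨u, hPu, v, hl2 v hv, hPv, huv⟩

end Graph

section Graph2

variable {α : Type*} (R : α → α → Prop)

lemma getLast?_append_right {l l' : List α} (h : l' ≠ []) :
    (l ++ l').getLast? = l'.getLast? := by
  rw [List.getLast?_append]
  cases h' : l'.getLast? with
  | none => exact absurd (List.getLast?_eq_none_iff.1 h') h
  | some v => rfl

lemma exists_noncut [DecidableEq α] {S : Finset α} (hsymm : Symmetric R)
    (hrefl : ∀ x ∈ S, R x x) (h2 : 2 ≤ S.card) (hS : GSep R S) :
    ∃ s ∈ S, (∃ t, t ∈ S.erase s ∧ R s t) ∧ GSep R (S.erase s) := by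
  classical
  obtain ⟨x₀, hx₀⟩ : S.Nonempty := Finset.card_pos.1 (by omega)
  set f : α → ℕ := fun y => sInf {n | ∃ l, GoodChain R S x₀ y l ∧ l.length = n} with hf
  obtain ⟨s, hsS, hmax⟩ := S.exists_max_image f ⟨x₀, hx₀⟩
  have hreach : ∀ y ∈ S, Reach R S x₀ y := reach_of_sep R hS hx₀
  have hattain : ∀ y ∈ S, ∃ l, GoodChain R S x₀ y l ∧ l.length = f y := by
    intro y hy
    have hne : {n | ∃ l, GoodChain R S x₀ y l ∧ l.length = n}.Nonempty :=
      (hreach y hy).elim fun l hl => ⟨l.length, l, hl, rfl⟩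
    obtain ⟨l, hl, hlen⟩ := Nat.sInf_mem hne
    exact ⟨l, hl, hlen⟩
  have hle : ∀ y (l : List α), GoodChain R S x₀ y l → f y ≤ l.length :=
    fun y l hl => Nat.sInf_le ⟨l, hl, rfl⟩
  have hgx₀ : GoodChain R S x₀ x₀ [x₀] := ⟨by simp, by simpa, by simp, by simp⟩
  have hfx₀ : f x₀ ≤ 1 := by simpa using hle x₀ [x₀] hgx₀
  obtain ⟨t₀, ht₀S, ht₀⟩ := Finset.exists_mem_ne (show 1 < S.card by omega) x₀
  have hft₀ : 2 ≤ f t₀ := by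
    obtain ⟨l, hl, hlen⟩ := hattain t₀ ht₀S
    match l, hl, hlen with
    | [], hl, _ => exact absurd rfl (goodChain_ne_nil R hl)
    | [a], hl, hlen =>
      obtain ⟨-, -, h3, h4⟩ := hl
      simp at h3 h4
      exact absurd (h3 ▸ h4 : x₀ = t₀) (Ne.symm ht₀)
    | a :: b :: l, _, hlen => simp at hlen; omega
  have hfs : 2 ≤ f s := le_trans hft₀ (hmax t₀ ht₀S)
  have hsx₀ : s ≠ x₀ := fun h => by rw [h] at hfs; omega
  have havoid : ∀ t ∈ S, t ≠ s → ∃ l, GoodChain R S x₀ t l ∧ s ∉ l := by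
    intro t htS hts
    obtain ⟨l, hl, hlen⟩ := hattain t htS
    refine ⟨l, hl, fun hsl => ?_⟩
    obtain ⟨l₁, l₂, rfl⟩ := List.append_of_mem hsl
    obtain ⟨hc1, hc2, hc3, hc4⟩ := hl
    have hl₁ne : l₁ ≠ [] := by
      rintro rfl
      simp at hc3
      exact hsx₀ hc3
    have hl₂ne : l₂ ≠ [] := by
      rintro rfl
      rw [List.getLast?_concat] at hc4
      simp at hc4
      exact hts hc4.symm
    rw [List.isChain_append] at hc1
    obtain ⟨hcl₁, hcl₂, hlink⟩ := hc1
    have hgood : GoodChain R S x₀ s (l₁ ++ [s]) := by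
      refine ⟨?_, ?_, ?_, ?_⟩
      · rw [List.isChain_append]
        refine ⟨hcl₁, List.isChain_singleton s, fun u hu v hv => ?_⟩
        simp at hv
        rw [← hv]
        exact hlink u hu s (by simp)
      · intro z hz
        rcases List.mem_append.1 hz with h | h
        · exact hc2 z (List.mem_append.2 (Or.inl h))
        · simp at h; rw [h]; exact hc2 s hsl
      · rw [List.head?_append_of_ne_nil _ hl₁ne]
        rw [List.head?_append_of_ne_nil _ hl₁ne] at hc3
        exact hc3
      · exact List.getLast?_concat
    have h1 : f s ≤ l₁.length + 1 := by simpa using hle s _ hgood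
    have hts' : f t ≤ f s := hmax t htS
    have h3 : l₁.length + (l₂.length + 1) = f t := by simpa using hlen
    have h4 : 1 ≤ l₂.length := List.length_pos_iff.2 hl₂ne
    omega
  have hreach' : ∀ x ∈ S.erase s, ∀ y ∈ S.erase s, Reach R (S.erase s) x y := by
    intro x hx y hy
    obtain ⟨lx, hlx, hlxs⟩ := havoid x (Finset.mem_of_mem_erase hx) (Finset.ne_of_mem_erase hx)
    obtain ⟨ly, hly, hlys⟩ := havoid y (Finset.mem_of_mem_erase hy) (Finset.ne_of_mem_erase hy)
    have hlxne := goodChain_ne_nil R hlx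
    have hlyne := goodChain_ne_nil R hly
    refine ⟨lx.reverse ++ ly, ?_, ?_, ?_, ?_⟩
    · rw [List.isChain_append]
      refine ⟨?_, hly.1, ?_⟩
      · rw [List.isChain_reverse]
        exact hlx.1.imp fun a b h => hsymm h
      · intro u hu v hv
        rw [List.getLast?_reverse, hlx.2.2.1] at hu
        rw [hly.2.2.1] at hv
        simp at hu hv
        rw [← hu, ← hv]
        exact hrefl x₀ hx₀
    · intro z hz
      rcases List.mem_append.1 hz with h | h
      · rw [List.mem_reverse] at h
        exact Finset.mem_erase.2 ⟨fun he => hlxs (he ▸ h), hlx.2.1 z h⟩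
      · exact Finset.mem_erase.2 ⟨fun he => hlys (he ▸ h), hly.2.1 z h⟩
    · rw [List.head?_append_of_ne_nil _ (by simpa using hlxne), List.head?_reverse]
      exact hlx.2.2.2
    · rw [getLast?_append_right hlyne]
      exact hly.2.2.2
  have hsep' : GSep R (S.erase s) := sep_of_reach R hreach'
  obtain ⟨a, haA, b, hbS, hbA, hab⟩ := hS {s} (by simpa) ⟨s, by simp⟩ (fun h => by
    rw [← h] at h2; simp at h2)
  rw [Finset.mem_singleton] at haA hbA
  subst haA
  exact ⟨a, hsS, ⟨b, Finset.mem_erase.2 ⟨hbA, hbS⟩, hab⟩, hsep'⟩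

end Graph2

lemma exists_tour {α : Type*} [DecidableEq α] (R : α → α → Prop) (hsymm : Symmetric R)
    (hrefl : ∀ x, R x x) :
    ∀ (n : ℕ) (S : Finset α), S.card = n → S.Nonempty → GSep R S →
      ∃ l : List α, l ≠ [] ∧ l.IsChain R ∧ (∀ x ∈ l, x ∈ S) ∧ (∀ s ∈ S, s ∈ l) ∧
        l.length ≤ 2 * S.card - 1 := by
  intro n
  induction n using Nat.strong_induction_on with
  | _ n ih =>
    intro S hcard hne hS
    rcases Nat.lt_or_ge n 2 with hn | hn
    · obtain ⟨s, hs⟩ := hne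
      have hc1 : S.card = 1 := le_antisymm (by omega) (Finset.card_pos.2 ⟨s, hs⟩)
      obtain ⟨a, rfl⟩ := Finset.card_eq_one.1 hc1
      refine ⟨[a], by simp, by simp, by simp, by simp, by simp⟩
    · obtain ⟨s, hsS, ⟨t, htE, hst⟩, hsep'⟩ :=
        exists_noncut R hsymm (fun x _ => hrefl x) (hcard ▸ hn) hS
      have hcard' : (S.erase s).card = n - 1 := by
        rw [Finset.card_erase_of_mem hsS, hcard]
      obtain ⟨l', hl'ne, hl'ch, hl'mem, hl'cov, hl'len⟩ :=
        ih (n-1) (by omega) (S.erase s) hcard' ⟨t, htE⟩ hsep'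
      have htl' : t ∈ l' := hl'cov t htE
      obtain ⟨l₁, l₂, rfl⟩ := List.append_of_mem htl'
      refine ⟨l₁ ++ t :: s :: t :: l₂, by simp, ?_, ?_, ?_, ?_⟩
      · rw [List.isChain_append] at hl'ch ⊢
        obtain ⟨h1, h2, h3⟩ := hl'ch
        refine ⟨h1, ?_, ?_⟩
        · rw [List.isChain_cons_cons]
          refine ⟨hsymm hst, ?_⟩
          rw [List.isChain_cons_cons]
          exact ⟨hst, h2⟩
        · intro u hu v hv
          simp at hv
          rw [← hv]
          exact h3 u hu t (by simp)
      · intro x hx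
        rcases List.mem_append.1 hx with h | h
        · exact Finset.mem_of_mem_erase (hl'mem x (List.mem_append.2 (Or.inl h)))
        · simp only [List.mem_cons] at h
          rcases h with rfl | rfl | rfl | h
          · exact Finset.mem_of_mem_erase (hl'mem x (List.mem_append.2 (Or.inr (by simp))))
          · exact hsS
          · exact Finset.mem_of_mem_erase (hl'mem x (List.mem_append.2 (Or.inr (by simp))))
          · exact Finset.mem_of_mem_erase (hl'mem x (List.mem_append.2 (Or.inr (by simp [h]))))
      · intro u huS
        by_cases hus : u = s
        · subst hus; simp
        · have hu := hl'cov u (Finset.mem_erase.2 ⟨hus, huS⟩)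
          rcases List.mem_append.1 hu with h | h
          · exact List.mem_append.2 (Or.inl h)
          · simp only [List.mem_cons] at h
            rcases h with rfl | h
            · simp
            · simp [h]
      · have := hl'len
        rw [hcard'] at this
        rw [hcard]
        simp only [List.length_append, List.length_cons] at this ⊢
        omega

section Interp

variable {F : Type*} [NormedAddCommGroup F] [NormedSpace ℝ F]

noncomputable def interp (p : ℕ → F) (t : ℝ) : F :=
  p ⌊t⌋₊ + (t - ⌊t⌋₊) • (p (⌊t⌋₊ + 1) - p ⌊t⌋₊)

lemma interp_nat (p : ℕ → F) (n : ℕ) : interp p n = p n := by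
  simp [interp]

lemma interp_eq_on (p : ℕ → F) {n : ℕ} {t : ℝ} (h1 : (n:ℝ) ≤ t) (h2 : t ≤ n+1) :
    interp p t = p n + (t - n) • (p (n+1) - p n) := by
  rcases h2.eq_or_lt with heq | hlt
  · subst heq
    rw [show ((n:ℝ)+1) = ((n+1 : ℕ):ℝ) by push_cast; ring, interp_nat]
    rw [show ((n+1 : ℕ):ℝ) - (n:ℝ) = 1 by push_cast; ring, one_smul]
    abel
  · have hfl : ⌊t⌋₊ = n := by
      rw [Nat.floor_eq_iff (le_trans (Nat.cast_nonneg n) h1)]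
      exact ⟨h1, hlt⟩
    simp [interp, hfl]

lemma interp_dist (p : ℕ → F) {d : ℝ} (hd : 0 ≤ d) (hp : ∀ n, dist (p n) (p (n+1)) ≤ d) :
    ∀ (n : ℕ) {s t : ℝ}, 0 ≤ s → s ≤ t → t ≤ n →
      dist (interp p s) (interp p t) ≤ d * (t - s) := by
  have hsingle : ∀ (n : ℕ) {s t : ℝ}, (n:ℝ) ≤ s → s ≤ t → t ≤ n+1 →
      dist (interp p s) (interp p t) ≤ d * (t - s) := by
    intro n s t h1 h2 h3
    rw [interp_eq_on p h1 (h2.trans h3), interp_eq_on p (h1.trans h2) h3]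
    rw [dist_eq_norm]
    have : p n + (s - n) • (p (n+1) - p n) - (p n + (t - n) • (p (n+1) - p n))
        = (s - t) • (p (n+1) - p n) := by
      rw [sub_smul, sub_smul, sub_smul]; abel
    rw [this, norm_smul, Real.norm_eq_abs, abs_of_nonpos (by linarith)]
    have hnorm : ‖p (n+1) - p n‖ ≤ d := by
      rw [← dist_eq_norm']; exact hp n
    have h4 : (0:ℝ) ≤ t - s := by linarith
    calc -(s-t) * ‖p (n+1) - p n‖ = (t-s) * ‖p (n+1) - p n‖ := by ring
      _ ≤ (t-s) * d := by exact mul_le_mul_of_nonneg_left hnorm h4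
      _ = d * (t-s) := by ring
  intro n
  induction n with
  | zero =>
    intro s t h1 h2 h3
    have hs : s = t := le_antisymm h2 (by simp at h3; linarith)
    rw [hs, dist_self, sub_self, mul_zero]
  | succ n ih =>
    intro s t h1 h2 h3
    by_cases ht : t ≤ n
    · exact ih h1 h2 ht
    · push_neg at ht
      by_cases hs : (n:ℝ) ≤ s
      · exact hsingle n hs h2 (by push_cast at h3 ⊢; linarith)
      · push_neg at hs
        calc dist (interp p s) (interp p t)
            ≤ dist (interp p s) (interp p n) + dist (interp p (n:ℝ)) (interp p t) :=
              dist_triangle _ _ _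
          _ ≤ d * ((n:ℝ) - s) + d * (t - (n:ℝ)) := by
              refine add_le_add (ih h1 hs.le le_rfl) (hsingle n le_rfl ht.le ?_)
              push_cast at h3 ⊢; linarith
          _ = d * (t - s) := by ring

lemma interp_close (p : ℕ → F) {d : ℝ} (hd : 0 ≤ d) (hp : ∀ n, dist (p n) (p (n+1)) ≤ d)
    {t : ℝ} (ht : 0 ≤ t) : dist (interp p t) (p ⌊t⌋₊) ≤ d := by
  rw [interp, dist_eq_norm]
  have : p ⌊t⌋₊ + (t - ⌊t⌋₊) • (p (⌊t⌋₊ + 1) - p ⌊t⌋₊) - p ⌊t⌋₊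
      = (t - ⌊t⌋₊) • (p (⌊t⌋₊ + 1) - p ⌊t⌋₊) := by abel
  rw [this, norm_smul, Real.norm_eq_abs]
  have h1 : 0 ≤ t - ⌊t⌋₊ := by
    have := Nat.floor_le ht; linarith
  have h2 : t - ⌊t⌋₊ ≤ 1 := by
    have := Nat.lt_floor_add_one t; linarith
  have h3 : ‖p (⌊t⌋₊+1) - p ⌊t⌋₊‖ ≤ d := by rw [← dist_eq_norm']; exact hp _
  calc |t - ⌊t⌋₊| * ‖p (⌊t⌋₊+1) - p ⌊t⌋₊‖ ≤ 1 * d := by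
        refine mul_le_mul (by rwa [abs_of_nonneg h1]) h3 (norm_nonneg _) one_pos.le
    _ = d := one_mul d

end Interp

lemma approx (K : Set E) (hK : IsCompact K) (hconn : IsPreconnected K) (hne : K.Nonempty)
    (hfin : μH[1] K < ⊤) (hL : 0 < (μH[1] K).toReal) {ε : ℝ} (hε : 0 < ε) :
    ∃ g : ℝ → E,
      (∀ s ∈ Icc (0:ℝ) (μH[1] K).toReal, ∀ t ∈ Icc (0:ℝ) (μH[1] K).toReal,
        dist (g s) (g t) ≤ 12 * dist s t) ∧
      (∀ t ∈ Icc (0:ℝ) (μH[1] K).toReal, ∃ y ∈ K, dist (g t) y ≤ 2*ε) ∧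
      (∀ x ∈ K, ∃ t ∈ Icc (0:ℝ) (μH[1] K).toReal, dist x (g t) ≤ 2*ε) := by
  classical
  set L : ℝ := (μH[1] K).toReal with hLdef
  obtain ⟨S, hSK, hSne, hsep, hdense⟩ := exists_net K hK hne hε
  by_cases hcard : S.card < 2
  · -- single point net
    obtain ⟨s, hs⟩ := hSne
    refine ⟨fun _ => s, ?_, ?_, ?_⟩
    · intro u _ v _; simp only [dist_self]; positivity
    · intro t _; exact ⟨s, hSK hs, by simp; linarith⟩
    · intro x hx
      obtain ⟨s', hs', hxs'⟩ := hdense x hx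
      have : s' = s := by
        by_contra hne'
        have h1 : S.card = 1 := le_antisymm (by omega) (Finset.card_pos.2 ⟨s, hs⟩)
        obtain ⟨a, ha⟩ := Finset.card_eq_one.1 h1
        rw [ha, Finset.mem_singleton] at hs hs'
        exact hne' (hs'.trans hs.symm)
      refine ⟨0, ⟨le_refl 0, hL.le⟩, ?_⟩
      rw [← this]; linarith
  · push_neg at hcard
    -- connectivity of the 2ε-graph
    have hGsep : GSep (fun a b => dist a b ≤ 2*ε) S := by
      intro A hAS hAne hAneS
      exact net_conn K hconn hε S hSK hdense A hAS hAne hAneS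
    obtain ⟨l, hlne, hlch, hlmem, hlcov, hllen⟩ :=
      exists_tour (fun a b => dist a b ≤ 2*ε) (fun a b h => by simpa [dist_comm] using h)
        (fun x => by show dist x x ≤ 2*ε; rw [dist_self]; positivity)
        S.card S rfl ⟨_, hSne.choose_spec⟩ hGsep
    set p : ℕ → E := fun i => l.getD i (l.getLast hlne) with hp
    have hpmem : ∀ i, p i ∈ S := by
      intro i
      by_cases h : i < l.length
      · simp only [hp, List.getD_eq_getElem _ _ h]
        exact hlmem _ (List.getElem_mem h)
      · simp only [hp, List.getD_eq_default _ _ (le_of_not_gt h)]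
        exact hlmem _ (List.getLast_mem hlne)
    have hllen2 : 2 ≤ l.length := by
      obtain ⟨a, haS, b, hbS, hab⟩ := Finset.one_lt_card.1 hcard
      by_contra hlen2
      push_neg at hlen2
      interval_cases h : l.length
      · exact hlne (List.length_eq_zero_iff.1 h)
      · obtain ⟨c, rfl⟩ := List.length_eq_one_iff.1 h
        have h1 := hlcov a haS
        have h2 := hlcov b hbS
        simp at h1 h2
        exact hab (h1.trans h2.symm)
    set M : ℕ := l.length - 1 with hM
    have hM1 : 1 ≤ M := by omega
    have hconsec : ∀ i, dist (p i) (p (i+1)) ≤ 2*ε := by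
      intro i
      by_cases h : i + 1 < l.length
      · have h' : i < l.length := by omega
        rw [hp]
        simp only [List.getD_eq_getElem _ _ h, List.getD_eq_getElem _ _ h']
        exact List.isChain_iff_getElem.1 hlch i (by omega)
      · have hpl : p (i+1) = l.getLast hlne := by
          rw [hp]; simp only [List.getD_eq_default _ _ (by omega : l.length ≤ i+1)]
        by_cases h' : i < l.length
        · have hieq : i = l.length - 1 := by omega
          subst hieq
          have hplast : p (l.length - 1) = l.getLast hlne := by
            simp only [hp, List.getD_eq_getElem _ _ h', List.getLast_eq_getElem]
          rw [hplast, hpl, dist_self]; positivity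
        · have : p i = l.getLast hlne := by
            rw [hp]; simp only [List.getD_eq_default _ _ (le_of_not_gt h')]
          rw [this, hpl, dist_self]; positivity
    -- cardinality bound : (S.card : ℝ) * (ε/3) ≤ L
    have hcount : (S.card : ℝ) * (ε/3) ≤ L := by
      have h1 := count_lb K hK hconn hε S hSK hsep hcard
      have h2 : ((S.card : ℝ≥0∞) * ENNReal.ofReal (ε/3)).toReal ≤ L := by
        rw [hLdef]
        exact ENNReal.toReal_mono hfin.ne h1
      rwa [ENNReal.toReal_mul, ENNReal.toReal_natCast, ENNReal.toReal_ofReal (by linarith)] at h2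
    have hMbound : (M : ℝ) * (2*ε) ≤ 12 * L := by
      have h1 : (M:ℝ) ≤ 2 * S.card := by
        have : (l.length : ℝ) ≤ 2 * S.card := by
          exact_mod_cast le_trans hllen (by omega : 2 * S.card - 1 ≤ 2 * S.card)
        have : (M:ℝ) ≤ (l.length : ℝ) := by exact_mod_cast Nat.sub_le _ _
        linarith
      calc (M:ℝ) * (2*ε) ≤ (2 * S.card) * (2*ε) := by
            apply mul_le_mul_of_nonneg_right h1; linarith
        _ = 12 * ((S.card:ℝ) * (ε/3)) := by ring
        _ ≤ 12 * L := by linarith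
    -- the map
    set g : ℝ → E := fun t => interp p (t * (M / L)) with hg
    have hML : (0:ℝ) ≤ M / L := by positivity
    refine ⟨g, ?_, ?_, ?_⟩
    · intro u hu v hv
      wlog huv : v ≤ u generalizing u v
      · rw [dist_comm, dist_comm u v]
        exact this v hv u hu (le_of_not_ge huv)
      obtain ⟨hu0, huL⟩ := hu
      obtain ⟨hv0, hvL⟩ := hv
      have h1 : 0 ≤ v * (M/L) := mul_nonneg hv0 hML
      have h2 : v * (M/L) ≤ u * (M/L) := mul_le_mul_of_nonneg_right huv hML
      have h3 : u * (M/L) ≤ (M:ℝ) := by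
        calc u * (M/L) ≤ L * (M/L) := mul_le_mul_of_nonneg_right huL hML
          _ = (M:ℝ) := by field_simp
      have key := interp_dist p (show (0:ℝ) ≤ 2*ε by positivity) hconsec M h1 h2 h3
      have hkey2 : dist (g u) (g v) ≤ (2*ε) * (u*(M/L) - v*(M/L)) := by
        simp only [hg]
        rw [dist_comm]
        exact key
      have hc : (2*ε) * (M/L) ≤ 12 := by
        calc (2*ε)*(M/L) = ((M:ℝ)*(2*ε))/L := by ring
          _ ≤ (12*L)/L := by gcongr
          _ = 12 := by field_simp
      have hdist : dist u v = u - v := by rw [Real.dist_eq, abs_of_nonneg (by linarith)]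
      rw [hdist]
      calc dist (g u) (g v) ≤ (2*ε)*(u*(M/L) - v*(M/L)) := hkey2
        _ = ((2*ε)*(M/L))*(u-v) := by ring
        _ ≤ 12*(u-v) := mul_le_mul_of_nonneg_right hc (by linarith)
    · intro t ht
      have h0 : 0 ≤ t * (M/L) := mul_nonneg ht.1 hML
      refine ⟨p ⌊t * (M/L)⌋₊, hSK (hpmem _), ?_⟩
      simp only [hg]
      exact interp_close p (show (0:ℝ) ≤ 2*ε by positivity) hconsec h0
    · intro x hx
      obtain ⟨s, hsS, hxs⟩ := hdense x hx
      obtain ⟨i, hi, hli⟩ := List.getElem_of_mem (hlcov s hsS)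
      have hiM : i ≤ M := by omega
      have hMne : (M:ℝ) ≠ 0 := by exact_mod_cast (by omega : M ≠ 0)
      refine ⟨(i:ℝ) * L / M, ⟨by positivity, ?_⟩, ?_⟩
      · calc (i:ℝ) * L / M ≤ (M:ℝ) * L / M := by
              have hiM' : (i:ℝ) ≤ (M:ℝ) := by exact_mod_cast hiM
              gcongr
          _ = L := by field_simp
      · have harg : ((i:ℝ) * L / M) * (M/L) = (i:ℝ) := by
          field_simp
        have : g ((i:ℝ) * L / M) = p i := by
          simp only [hg, harg]
          exact_mod_cast interp_nat p i
        rw [this]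
        have hpi : p i = s := by
          simp only [hp, List.getD_eq_getElem _ _ hi]
          exact hli
        rw [hpi]
        linarith

/-- A compact connected set `K ⊂ ℝ²` with `L := H¹(K) < ∞` admits a Lipschitz
surjective parametrization `f : [0,L] → K`; in particular `K` is arcwise connected. -/
theorem stmt_2 (K : Set (EuclideanSpace ℝ (Fin 2)))
    (hK : IsCompact K) (hconn : IsConnected K) (hfin : μH[1] K < ⊤) :
    (∃ (C : ℝ≥0) (f : ℝ → EuclideanSpace ℝ (Fin 2)),
        LipschitzOnWith C f (Icc 0 (μH[1] K).toReal) ∧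
        f '' Icc 0 (μH[1] K).toReal = K) ∧
      IsPathConnected K := by
  classical
  obtain ⟨x₀, hx₀⟩ := hconn.nonempty
  by_cases hL0 : (μH[1] K).toReal = 0
  · -- degenerate case : K is a single point
    have hsub : K = {x₀} := by
      refine Subset.antisymm (fun y hy => ?_) (by simpa using hx₀)
      by_contra hne
      have hyx : y ≠ x₀ := by simpa using hne
      have hdist : 0 < dist x₀ y := dist_pos.2 (fun h => hyx h.symm)
      have h1 := key_lb K hK hconn.isPreconnected hx₀ dist_nonneg ⟨y, hy, le_rfl⟩
      have h2 : ENNReal.ofReal (dist x₀ y) ≤ μH[1] K :=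
        h1.trans (measure_mono inter_subset_left)
      have h3 : 0 < (μH[1] K).toReal := by
        refine ENNReal.toReal_pos (fun h0 => ?_) hfin.ne
        rw [h0, nonpos_iff_eq_zero, ENNReal.ofReal_eq_zero] at h2
        linarith
      exact absurd hL0 h3.ne'
    constructor
    · refine ⟨1, fun _ => x₀, ?_, ?_⟩
      · rw [lipschitzOnWith_iff_dist_le_mul]
        intro x _ y _
        simp only [dist_self]
        positivity
      · rw [hL0, Set.Icc_self, Set.image_singleton, hsub]
    · rw [hsub]
      exact isPathConnected_singleton x₀
  · have hLpos : 0 < (μH[1] K).toReal := lt_of_le_of_ne ENNReal.toReal_nonneg (Ne.symm hL0)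
    set L : ℝ := (μH[1] K).toReal with hLdef
    choose g hg1 hg2 hg3 using fun n : ℕ =>
      approx K hK hconn.isPreconnected hconn.nonempty hfin hLpos
        (show (0:ℝ) < (1/2)^n by positivity)
    haveI : Nonempty ↥(Icc (0:ℝ) L) := ⟨⟨0, left_mem_Icc.2 hLpos.le⟩⟩
    obtain ⟨u, hu⟩ := TopologicalSpace.exists_dense_seq ↥(Icc (0:ℝ) L)
    set K₁ : Set (EuclideanSpace ℝ (Fin 2)) := cthickening 2 K with hK₁def
    have hK₁ : IsCompact K₁ := hK.cthickening
    have hmem : ∀ (n : ℕ) (t : ℝ), t ∈ Icc (0:ℝ) L → g n t ∈ K₁ := by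
      intro n t ht
      obtain ⟨y, hyK, hyd⟩ := hg2 n t ht
      refine mem_cthickening_of_dist_le (g n t) y 2 K hyK ?_
      have hpow : ((1:ℝ)/2)^n ≤ 1 := pow_le_one₀ (by norm_num) (by norm_num)
      linarith
    haveI : CompactSpace ↥K₁ := isCompact_iff_compactSpace.1 hK₁
    set Φ : ℕ → (ℕ → ↥K₁) := fun n i => ⟨g n ((u i : ℝ)), hmem n _ (u i).2⟩ with hΦ
    obtain ⟨a, φ, hφmono, hφtend⟩ := CompactSpace.tendsto_subseq Φ
    have hptwise : ∀ i, Tendsto (fun k => g (φ k) ((u i : ℝ))) atTop (𝓝 ((a i : EuclideanSpace ℝ (Fin 2)))) := by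
      intro i
      have h1 : Tendsto (fun k => Φ (φ k) i) atTop (𝓝 (a i)) := tendsto_pi_nhds.1 hφtend i
      exact ((continuous_subtype_val.tendsto (a i)).comp h1)
    have hεtend : Tendsto (fun k => 2 * (1/2:ℝ)^(φ k)) atTop (𝓝 0) := by
      have h1 : Tendsto (fun n => (1/2:ℝ)^n) atTop (𝓝 0) :=
        tendsto_pow_atTop_nhds_zero_of_lt_one (by norm_num) (by norm_num)
      have h2 := (h1.comp hφmono.tendsto_atTop).const_mul (2:ℝ)
      simpa using h2
    have hcauchy : ∀ t ∈ Icc (0:ℝ) L, ∃ z : EuclideanSpace ℝ (Fin 2),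
        Tendsto (fun k => g (φ k) t) atTop (𝓝 z) := by
      intro t ht
      apply cauchySeq_tendsto_of_complete
      rw [Metric.cauchySeq_iff]
      intro δ hδ
      obtain ⟨i, hi⟩ := hu.exists_dist_lt (⟨t, ht⟩ : ↥(Icc (0:ℝ) L)) (show (0:ℝ) < δ/100 by linarith)
      have hti : dist t ((u i : ℝ)) < δ/100 := by
        rw [Subtype.dist_eq] at hi
        exact hi
      have hc : CauchySeq (fun k => g (φ k) ((u i : ℝ))) := (hptwise i).cauchySeq
      rw [Metric.cauchySeq_iff] at hc
      obtain ⟨N, hN⟩ := hc (δ/2) (by linarith)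
      refine ⟨N, fun m hm n hn => ?_⟩
      have h1 := hg1 (φ m) t ht ((u i : ℝ)) (u i).2
      have h2 := hg1 (φ n) ((u i : ℝ)) (u i).2 t ht
      have h3 := hN m hm n hn
      have h4 : dist ((u i : ℝ)) t = dist t ((u i : ℝ)) := dist_comm _ _
      calc dist (g (φ m) t) (g (φ n) t)
          ≤ dist (g (φ m) t) (g (φ m) ((u i : ℝ))) + dist (g (φ m) ((u i : ℝ))) (g (φ n) ((u i : ℝ)))
            + dist (g (φ n) ((u i : ℝ))) (g (φ n) t) := dist_triangle4 _ _ _ _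
        _ < δ := by rw [h4] at h2; linarith
    choose flim hflim using hcauchy
    set f : ℝ → EuclideanSpace ℝ (Fin 2) :=
      fun t => if ht : t ∈ Icc (0:ℝ) L then flim t ht else x₀ with hf
    have hftend : ∀ t (ht : t ∈ Icc (0:ℝ) L),
        Tendsto (fun k => g (φ k) t) atTop (𝓝 (f t)) := by
      intro t ht
      simp only [hf]
      rw [dif_pos ht]
      exact hflim t ht
    have hlip : LipschitzOnWith 12 f (Icc 0 L) := by
      rw [lipschitzOnWith_iff_dist_le_mul]
      intro s hs t ht
      have htd : Tendsto (fun k => dist (g (φ k) s) (g (φ k) t)) atTop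
          (𝓝 (dist (f s) (f t))) := (hftend s hs).dist (hftend t ht)
      have hle := le_of_tendsto htd (Filter.Eventually.of_forall fun k => hg1 (φ k) s hs t ht)
      refine hle.trans_eq ?_
      norm_num
    have himg1 : ∀ t ∈ Icc (0:ℝ) L, f t ∈ K := by
      intro t ht
      choose y hyK hyd using fun k => hg2 (φ k) t ht
      have hy_tend : Tendsto y atTop (𝓝 (f t)) := by
        rw [tendsto_iff_dist_tendsto_zero]
        have hupper : Tendsto (fun k => 2*(1/2:ℝ)^(φ k) + dist (g (φ k) t) (f t)) atTop (𝓝 0) := by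
          have h2 : Tendsto (fun k => dist (g (φ k) t) (f t)) atTop (𝓝 0) :=
            tendsto_iff_dist_tendsto_zero.1 (hftend t ht)
          simpa using hεtend.add h2
        refine tendsto_of_tendsto_of_tendsto_of_le_of_le tendsto_const_nhds hupper
          (fun k => dist_nonneg) (fun k => ?_)
        calc dist (y k) (f t) ≤ dist (y k) (g (φ k) t) + dist (g (φ k) t) (f t) :=
              dist_triangle _ _ _
          _ ≤ 2*(1/2:ℝ)^(φ k) + dist (g (φ k) t) (f t) := by
              have := hyd k
              rw [dist_comm] at this
              linarith
      exact hK.isClosed.mem_of_tendsto hy_tend (Filter.Eventually.of_forall hyK)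
    have himg2 : ∀ x ∈ K, ∃ t ∈ Icc (0:ℝ) L, f t = x := by
      intro x hx
      choose t htI htd using fun k => hg3 (φ k) x hx
      obtain ⟨t₀, ht₀, ψ, hψmono, hψtend⟩ := isCompact_Icc.tendsto_subseq htI
      refine ⟨t₀, ht₀, ?_⟩
      have hbound : ∀ j, dist (f t₀) x ≤ dist (f t₀) (g (φ (ψ j)) t₀)
          + 12 * dist t₀ (t (ψ j)) + 2*(1/2:ℝ)^(φ (ψ j)) := by
        intro j
        have hmid := hg1 (φ (ψ j)) t₀ ht₀ (t (ψ j)) (htI (ψ j))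
        have hlast := htd (ψ j)
        rw [dist_comm] at hlast
        calc dist (f t₀) x ≤ dist (f t₀) (g (φ (ψ j)) t₀)
              + dist (g (φ (ψ j)) t₀) (g (φ (ψ j)) (t (ψ j)))
              + dist (g (φ (ψ j)) (t (ψ j))) x := dist_triangle4 _ _ _ _
          _ ≤ _ := by linarith
      have hlim : Tendsto (fun j => dist (f t₀) (g (φ (ψ j)) t₀)
          + 12 * dist t₀ (t (ψ j)) + 2*(1/2:ℝ)^(φ (ψ j))) atTop (𝓝 0) := by
        have h1 : Tendsto (fun j => dist (f t₀) (g (φ (ψ j)) t₀)) atTop (𝓝 0) := by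
          have ha := (hftend t₀ ht₀).comp hψmono.tendsto_atTop
          have := tendsto_iff_dist_tendsto_zero.1 ha
          simpa [dist_comm] using this
        have h2 : Tendsto (fun j => 12 * dist t₀ (t (ψ j))) atTop (𝓝 0) := by
          have := tendsto_iff_dist_tendsto_zero.1 hψtend
          have h2' := this.const_mul (12:ℝ)
          simpa [dist_comm] using h2'
        have h3 : Tendsto (fun j => 2*(1/2:ℝ)^(φ (ψ j))) atTop (𝓝 0) :=
          hεtend.comp hψmono.tendsto_atTop
        simpa using (h1.add h2).add h3
      have hle : dist (f t₀) x ≤ 0 :=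
        ge_of_tendsto hlim (Filter.Eventually.of_forall hbound)
      exact dist_le_zero.1 hle
    have himage : f '' Icc 0 L = K := by
      refine Subset.antisymm ?_ ?_
      · rintro _ ⟨t, ht, rfl⟩
        exact himg1 t ht
      · intro x hx
        obtain ⟨t, ht, hft⟩ := himg2 x hx
        exact ⟨t, ht, hft⟩
    refine ⟨⟨12, f, hlip, himage⟩, ?_⟩
    rw [← himage]
    exact ((convex_Icc (0:ℝ) L).isPathConnected ⟨0, left_mem_Icc.2 hLpos.le⟩).image'
      hlip.continuousOn
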